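/- For every positive integer n, p_n = ((n+2)²/((n+1)(n+3)))·exp((n+1)/(2(n+2)²)) < Ω_n²/(Ω_{n-1}·Ω_{n+1}). -/

import Mathlib

open Real

noncomputable def unitBallVolume (n : ℕ) : ℝ :=
  Real.pi ^ ((n : ℝ) / 2) / Real.Gamma (1 + (n : ℝ) / 2)

open Finset

/-- The ratio `Γ(t)Γ(t+1)/Γ(t+1/2)²`. -/
noncomputable def Qr (t : ℝ) : ℝ :=
  Real.Gamma t * Real.Gamma (t + 1) / Real.Gamma (t + 1/2) ^ 2

noncomputable def gg (s : ℝ) : ℝ := (2*s+1)^2 / (4*s*(s+1))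

lemma Qr_ge_one {t : ℝ} (ht : 0 < t) : 1 ≤ Qr t := by
  have hA : 0 < Real.Gamma t := Real.Gamma_pos_of_pos ht
  have hB : 0 < Real.Gamma (t + 1) := Real.Gamma_pos_of_pos (by linarith)
  have hC : 0 < Real.Gamma (t + 1/2) := Real.Gamma_pos_of_pos (by linarith)
  have hconv := Real.convexOn_log_Gamma.2 (Set.mem_Ioi.2 ht)
    (Set.mem_Ioi.2 (show (0:ℝ) < t + 1 by linarith))
    (by norm_num : (0:ℝ) ≤ 1/2) (by norm_num : (0:ℝ) ≤ 1/2) (by norm_num)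
  simp only [smul_eq_mul, Function.comp_apply] at hconv
  have harg : (1:ℝ)/2 * t + 1/2 * (t+1) = t + 1/2 := by ring
  rw [harg] at hconv
  have h2 : Real.Gamma (t + 1/2) ^ 2 ≤ Real.Gamma t * Real.Gamma (t + 1) := by
    have := Real.exp_le_exp.mpr (show 2 * Real.log (Real.Gamma (t+1/2)) ≤
        Real.log (Real.Gamma t) + Real.log (Real.Gamma (t+1)) by linarith)
    rw [two_mul, Real.exp_add, Real.exp_add, Real.exp_log hA, Real.exp_log hB,
      Real.exp_log hC] at this
    nlinarith [this]
  rw [Qr, le_div_iff₀ (by positivity)]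
  linarith

lemma Qr_step {t : ℝ} (ht : 0 < t) : Qr t = (2*t+1)^2 / (4*t*(t+1)) * Qr (t+1) := by
  have h1 : Real.Gamma (t + 1) = t * Real.Gamma t := Real.Gamma_add_one (ne_of_gt ht)
  have h2 : Real.Gamma (t + 1 + 1) = (t+1) * Real.Gamma (t+1) :=
    Real.Gamma_add_one (by positivity)
  have e3 : t + 1 + 1/2 = (t + 1/2) + 1 := by ring
  have h3 : Real.Gamma (t + 1 + 1/2) = (t+1/2) * Real.Gamma (t+1/2) := by
    rw [e3]; exact Real.Gamma_add_one (by positivity)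
  have hA : 0 < Real.Gamma t := Real.Gamma_pos_of_pos ht
  have hC : 0 < Real.Gamma (t + 1/2) := Real.Gamma_pos_of_pos (by linarith)
  rw [Qr, Qr, h2, h3, h1]
  field_simp
  ring

lemma Qr_eq_prod {t : ℝ} (ht : 0 < t) (N : ℕ) :
    Qr t = (∏ j ∈ range N, gg (t + j)) * Qr (t + N) := by
  induction N with
  | zero => simp
  | succ N ih =>
    rw [ih, prod_range_succ]
    have htN : 0 < t + (N:ℝ) := by positivity
    rw [Qr_step htN]
    push_cast
    rw [gg, ← add_assoc]
    ring

lemma Qr_ge_prod {t : ℝ} (ht : 0 < t) (N : ℕ) :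
    (∏ j ∈ range N, gg (t + j)) ≤ Qr t := by
  have hprodpos : 0 ≤ ∏ j ∈ range N, gg (t + j) := by
    apply prod_nonneg
    intro j _
    have : (0:ℝ) < t + j := by positivity
    rw [gg]; positivity
  calc (∏ j ∈ range N, gg (t + j)) = (∏ j ∈ range N, gg (t + j)) * 1 := by ring
    _ ≤ (∏ j ∈ range N, gg (t + j)) * Qr (t + N) := by
        apply mul_le_mul_of_nonneg_left (Qr_ge_one (by positivity)) hprodpos
    _ = Qr t := (Qr_eq_prod ht N).symm

lemma sum_inv_sq_ge {x : ℝ} (hx : 1 ≤ x) {N : ℕ} (hN : (x+6)^5 ≤ 2*(N:ℝ)) :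
    (x+1)/(2*(x+2)^2) ≤ ∑ j ∈ range N, 1/(x+4+2*(j:ℝ))^2 := by
  set F : ℕ → ℝ := fun j => (x+1)/(2*((x+1)*(x+4+2*(j:ℝ)) - x)) with hF
  have hDpos : ∀ j : ℕ, 0 < (x+1)*(x+4+2*(j:ℝ)) - x := by
    intro j
    have : (0:ℝ) ≤ (j:ℝ) := Nat.cast_nonneg j
    nlinarith
  have hNpos : 0 < N := by
    rcases Nat.eq_zero_or_pos N with h | h
    · subst h; norm_num at hN; nlinarith [pow_pos (show (0:ℝ) < x+6 by linarith) 5]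
    · exact h
  have hterm : ∀ j : ℕ, F j - F (j+1) ≤ 1/(x+4+2*(j:ℝ))^2 := by
    intro j
    have hj : (0:ℝ) ≤ (j:ℝ) := Nat.cast_nonneg j
    have h1 := hDpos j
    have h2 := hDpos (j+1)
    push_cast at h2
    have hm : (0:ℝ) < (x+4+2*(j:ℝ))^2 := by positivity
    rw [hF]
    simp only
    push_cast
    rw [div_sub_div _ _ (by nlinarith) (by nlinarith),
      div_le_div_iff₀ (by nlinarith) hm]
    nlinarith [mul_nonneg hj (mul_nonneg hj (le_of_lt (lt_of_lt_of_le one_pos hx))),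
      mul_nonneg hj (le_of_lt (lt_of_lt_of_le one_pos hx)), sq_nonneg (j:ℝ)]
  have hfirst : 1/(2*(x+6)^5) ≤ 1/(x+4+2*((0:ℕ):ℝ))^2 - (F 0 - F 1) := by
    have h1 := hDpos 0
    have h2 := hDpos 1
    push_cast at h1 h2
    have heq : F 0 - F 1 = (x+1)^2 / ((x+2)^2 * (x^2+6*x+6)) := by
      rw [hF]
      simp only
      push_cast
      rw [div_sub_div _ _ (by nlinarith) (by nlinarith),
        div_eq_div_iff (by nlinarith) (by nlinarith)]
      ring
    rw [heq]
    rw [show (((0:ℕ):ℝ)) = 0 by norm_num]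
    have e0 : 1/(x+4+2*(0:ℝ))^2 = 1/(x+4)^2 := by norm_num
    rw [e0]
    have hd1 : (0:ℝ) < (x+4)^2 := by positivity
    have hd2 : (0:ℝ) < (x+2)^2*(x^2+6*x+6) := by positivity
    have hsub : 1/(x+4)^2 - (x+1)^2/((x+2)^2*(x^2+6*x+6))
        = (x^2+8*x+8) / ((x+4)^2 * ((x+2)^2*(x^2+6*x+6))) := by
      rw [div_sub_div _ _ (ne_of_gt hd1) (ne_of_gt hd2),
        div_eq_div_iff (by positivity) (by positivity)]
      ring
    rw [hsub, div_le_div_iff₀ (by positivity) (by positivity)]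
    have s1 : (x+4)^2*((x+2)^2*(x^2+6*x+6)) ≤ (x+6)^6 := by
      nlinarith [sq_nonneg x, sq_nonneg (x+1)]
    have s2 : (x+6)^6 ≤ (x^2+8*x+8) * (2*(x+6)^5) := by
      have h6 : (0:ℝ) < (x+6)^5 := by positivity
      have h66 : (x+6)^6 = (x+6) * (x+6)^5 := by ring
      rw [h66]
      have hlin : x+6 ≤ 2*(x^2+8*x+8) := by nlinarith
      nlinarith [mul_le_mul_of_nonneg_right hlin (le_of_lt h6)]
    calc 1 * ((x+4)^2*((x+2)^2*(x^2+6*x+6))) = (x+4)^2*((x+2)^2*(x^2+6*x+6)) := by ring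
      _ ≤ (x+6)^6 := s1
      _ ≤ (x^2+8*x+8) * (2*(x+6)^5) := s2
  have htele : ∑ j ∈ range N, (F j - F (j+1)) = F 0 - F N :=
    Finset.sum_range_sub' F N
  have hsingle : 1/(x+4+2*((0:ℕ):ℝ))^2 - (F 0 - F 1) ≤
      ∑ j ∈ range N, (1/(x+4+2*(j:ℝ))^2 - (F j - F (j+1))) := by
    apply Finset.single_le_sum (f := fun j : ℕ => 1/(x+4+2*(j:ℝ))^2 - (F j - F (j+1)))
    · intro j _
      have := hterm j
      linarith
    · exact mem_range.2 hNpos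
  have hsum : ∑ j ∈ range N, (1/(x+4+2*(j:ℝ))^2 - (F j - F (j+1)))
      = (∑ j ∈ range N, 1/(x+4+2*(j:ℝ))^2) - (F 0 - F N) := by
    rw [Finset.sum_sub_distrib, htele]
  have hF0 : F 0 = (x+1)/(2*(x+2)^2) := by
    rw [hF]
    simp only
    norm_num
    rw [show (x+1)*(x+4) - x = (x+2)^2 by ring]
  have hFN : F N ≤ 1/(2*(x+6)^5) := by
    have hD := hDpos N
    have h2N := mul_le_mul_of_nonneg_left hN (show (0:ℝ) ≤ x+1 by linarith)
    have hNn : (0:ℝ) ≤ (N:ℝ) := Nat.cast_nonneg N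
    have hDN : (x+6)^5 * (x+1) ≤ (x+1)*(x+4+2*(N:ℝ)) - x := by nlinarith [h2N]
    have h5 : (0:ℝ) < (x+6)^5 := pow_pos (by linarith) 5
    rw [hF]
    simp only
    rw [div_le_div_iff₀ (by linarith) (by positivity)]
    linarith [hDN]
  rw [hsum] at hsingle
  have hfin : 1/(2*(x+6)^5) ≤ (∑ j ∈ range N, 1/(x+4+2*(j:ℝ))^2) - (F 0 - F N) := by
    linarith [hfirst]
  rw [hF0] at hfin
  linarith [hFN]

lemma prod_gt_exp {x : ℝ} (hx : 1 ≤ x) {N : ℕ} (hN : (x+6)^5 ≤ 2*(N:ℝ)) :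
    Real.exp ((x+1)/(2*(x+2)^2)) < ∏ j ∈ range N, gg ((x+3)/2 + j) := by
  have hNpos : 0 < N := by
    rcases Nat.eq_zero_or_pos N with h | h
    · subst h; norm_num at hN
      nlinarith [pow_pos (show (0:ℝ) < x+6 by linarith) 5]
    · exact h
  have hfac : ∀ j ∈ range N, Real.exp (1/(x+4+2*(j:ℝ))^2) < gg ((x+3)/2 + j) := by
    intro j _
    have hj : (0:ℝ) ≤ (j:ℝ) := Nat.cast_nonneg j
    set m : ℝ := x+4+2*(j:ℝ) with hm
    have hm5 : 5 ≤ m := by rw [hm]; linarith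
    have hm2 : (0:ℝ) < m^2 := by positivity
    have hm21 : (0:ℝ) < m^2 - 1 := by nlinarith
    set u : ℝ := 1/m^2 with hu
    have hu0 : 0 < u := by positivity
    have hu1 : u < 1 := by rw [hu, div_lt_one hm2]; nlinarith
    have h1 : -u + 1 < Real.exp (-u) := Real.add_one_lt_exp (by linarith)
    have h2 : (1-u) * Real.exp u < 1 := by
      calc (1-u) * Real.exp u < Real.exp (-u) * Real.exp u := by
            apply mul_lt_mul_of_pos_right (by linarith) (Real.exp_pos u)
        _ = 1 := by rw [← Real.exp_add]; norm_num
    have h3 : Real.exp u < 1/(1-u) := by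
      rw [lt_div_iff₀ (by linarith : (0:ℝ) < 1-u)]
      linarith
    have h4 : 1/(1-u) = m^2/(m^2-1) := by
      rw [hu]
      rw [one_sub_div (ne_of_gt hm2), one_div_div]
    have h5 : gg ((x+3)/2 + j) = m^2/(m^2-1) := by
      rw [gg]
      congr 1
      · rw [hm]; ring
      · rw [hm]; ring
    rw [h5, ← h4]
    exact h3
  calc Real.exp ((x+1)/(2*(x+2)^2))
      ≤ Real.exp (∑ j ∈ range N, 1/(x+4+2*(j:ℝ))^2) :=
        Real.exp_le_exp.mpr (sum_inv_sq_ge hx hN)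
    _ = ∏ j ∈ range N, Real.exp (1/(x+4+2*(j:ℝ))^2) := Real.exp_sum _ _
    _ < ∏ j ∈ range N, gg ((x+3)/2 + j) := by
        apply Finset.prod_lt_prod_of_nonempty
        · intro i _; exact Real.exp_pos _
        · exact hfac
        · exact nonempty_range_iff.mpr (Nat.pos_iff_ne_zero.mp hNpos)

theorem stmt_15 (n : ℕ) (hn : 1 ≤ n) :
    (((n : ℝ) + 2) ^ 2 / (((n : ℝ) + 1) * ((n : ℝ) + 3))) *
        Real.exp (((n : ℝ) + 1) / (2 * ((n : ℝ) + 2) ^ 2)) <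
      unitBallVolume n ^ 2 / (unitBallVolume (n - 1) * unitBallVolume (n + 1)) := by
  set x := (n : ℝ) with hxdef
  have hx : 1 ≤ x := by rw [hxdef]; exact_mod_cast hn
  set t := (x+1)/2 with htdef
  have ht : 0 < t := by rw [htdef]; linarith
  have hc1 : ((n - 1 : ℕ) : ℝ) = x - 1 := by
    rw [Nat.cast_sub hn]; norm_num; exact hxdef.symm
  have hc2 : ((n + 1 : ℕ) : ℝ) = x + 1 := by push_cast; ring
  have hratio : unitBallVolume n ^ 2 / (unitBallVolume (n - 1) * unitBallVolume (n + 1))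
      = Qr t := by
    rw [unitBallVolume, unitBallVolume, unitBallVolume, hc1, hc2, Qr]
    have g1 : 1 + x/2 = t + 1/2 := by rw [htdef]; ring
    have g2 : 1 + (x-1)/2 = t := by rw [htdef]; ring
    have g3 : 1 + (x+1)/2 = t + 1 := by rw [htdef]; ring
    rw [g1, g2, g3]
    have hA : 0 < Real.Gamma t := Real.Gamma_pos_of_pos ht
    have hB : 0 < Real.Gamma (t+1) := Real.Gamma_pos_of_pos (by linarith)
    have hC : 0 < Real.Gamma (t+1/2) := Real.Gamma_pos_of_pos (by linarith)
    have hp2 : (0:ℝ) < Real.pi ^ ((x-1)/2) := Real.rpow_pos_of_pos Real.pi_pos _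
    have hp3 : (0:ℝ) < Real.pi ^ ((x+1)/2) := Real.rpow_pos_of_pos Real.pi_pos _
    have hpsq : (Real.pi ^ (x/2)) ^ 2 = Real.pi ^ ((x-1)/2) * Real.pi ^ ((x+1)/2) := by
      rw [sq, ← Real.rpow_add Real.pi_pos, ← Real.rpow_add Real.pi_pos]
      congr 1
      ring
    rw [div_pow, hpsq]
    field_simp
  rw [hratio]
  set N : ℕ := (n + 6)^5 with hNdef
  have hNcast : ((N:ℕ):ℝ) = (x+6)^5 := by rw [hNdef]; push_cast; ring
  have hN : (x+6)^5 ≤ 2*(N:ℝ) := by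
    rw [hNcast]
    nlinarith [pow_pos (show (0:ℝ) < x+6 by linarith) 5]
  have hprod : (∏ j ∈ range (N+1), gg (t + j)) ≤ Qr t := Qr_ge_prod ht (N+1)
  have hpeel : (∏ j ∈ range (N+1), gg (t + j))
      = (∏ j ∈ range N, gg ((x+3)/2 + j)) * gg t := by
    rw [Finset.prod_range_succ']
    have h0 : gg (t + ((0:ℕ):ℝ)) = gg t := by norm_num
    rw [h0]
    have hc : ∀ i ∈ range N, gg (t + ((i+1 : ℕ):ℝ)) = gg ((x+3)/2 + (i:ℝ)) := by
      intro i _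
      have harg : t + ((i+1 : ℕ):ℝ) = (x+3)/2 + (i:ℝ) := by
        push_cast
        rw [htdef]
        ring
      rw [harg]
    rw [Finset.prod_congr rfl hc]
  have hggt : gg t = (x+2)^2/((x+1)*(x+3)) := by
    rw [gg]
    congr 1
    · rw [htdef]; ring
    · rw [htdef]; ring
  have hggtpos : 0 < gg t := by
    rw [hggt]; positivity
  have hmain := prod_gt_exp hx hN
  calc (x + 2)^2 / ((x+1)*(x+3)) * Real.exp ((x+1)/(2*(x+2)^2))
      = gg t * Real.exp ((x+1)/(2*(x+2)^2)) := by rw [hggt]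
    _ < gg t * (∏ j ∈ range N, gg ((x+3)/2 + j)) := by
        exact mul_lt_mul_of_pos_left hmain hggtpos
    _ = (∏ j ∈ range (N+1), gg (t + j)) := by rw [hpeel]; ring
    _ ≤ Qr t := hprod
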